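/- More generally, for a formal parameter κ, the formal power series χ(y,κ) ∈ y·Q[κ][[y]] with χ(0,κ)=0 satisfying ∂χ/∂y = (1+χ)/(1+y−κχ) also satisfies κ(1+χ)·log(1+χ) = (κ+1)χ − y. -/

import Mathlib

open PowerSeries

/-- The formal logarithm `log(1+u) = ∑_{k≥1} (-1)^{k+1} u^k / k` for a power series
`u` with vanishing constant term, over a `ℚ`-algebra. -/
noncomputable def logOnePlus {R : Type*} [CommRing R] [Algebra ℚ R]
    (u : PowerSeries R) : PowerSeries R :=
  PowerSeries.mk fun n =>
    ∑ k ∈ Finset.Icc 1 n, ((-1 : ℚ) ^ (k + 1) / (k : ℚ)) • (PowerSeries.coeff (R := R) n (u ^ k))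

section Aux

variable {R : Type*} [CommRing R] [Algebra ℚ R]

lemma aux_coeff_derivativeFun (f : PowerSeries R) (n : ℕ) :
    coeff n (derivativeFun f) = coeff (n + 1) f * (n + 1) := coeff_derivative f n

lemma aux_derivativeFun_C (r : R) : derivativeFun (PowerSeries.C r) = 0 := derivative_C (r := r)

lemma aux_derivativeFun_sub (f g : PowerSeries R) :
    derivativeFun (f - g) = derivativeFun f - derivativeFun g := by
  ext n
  simp [aux_coeff_derivativeFun, sub_mul]

lemma aux_derivativeFun_mul' (f g : PowerSeries R) :
    derivativeFun (f * g) = f * derivativeFun g + g * derivativeFun f := by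
  rw [derivativeFun_mul, smul_eq_mul, smul_eq_mul]

lemma aux_derivativeFun_pow (f : PowerSeries R) (k : ℕ) :
    derivativeFun (f ^ (k + 1)) = ((k : PowerSeries R) + 1) * f ^ k * derivativeFun f := by
  induction k with
  | zero => simp [aux_derivativeFun_mul']
  | succ k ih =>
    rw [pow_succ, aux_derivativeFun_mul', ih]
    push_cast
    ring

lemma aux_coeff_pow_eq_zero {f : PowerSeries R}
    (h0 : constantCoeff f = 0) {k n : ℕ} (h : n < k) :
    coeff n (f ^ k) = 0 :=
  X_pow_dvd_iff.mp (pow_dvd_pow_of_dvd (X_dvd_iff.mpr h0) k) n h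

/-- Partial sums of the log series. -/
noncomputable def logPS (f : PowerSeries R) (N : ℕ) : PowerSeries R :=
  ∑ k ∈ Finset.Icc 1 N, PowerSeries.C (algebraMap ℚ R ((-1 : ℚ) ^ (k + 1) / (k : ℚ))) * f ^ k

lemma aux_coeff_log_eq {f : PowerSeries R} (h0 : constantCoeff f = 0)
    {n N : ℕ} (hnN : n ≤ N) :
    coeff n (logOnePlus f) = coeff n (logPS f N) := by
  rw [logOnePlus, coeff_mk, logPS, map_sum]
  rw [Finset.sum_subset (Finset.Icc_subset_Icc_right hnN)]
  · apply Finset.sum_congr rfl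
    intro k _
    rw [coeff_C_mul, Algebra.smul_def]
  · intro k hk hk'
    have hkn : n < k := by
      simp only [Finset.mem_Icc] at hk hk'
      omega
    rw [aux_coeff_pow_eq_zero h0 hkn, smul_zero]

lemma aux_telescope (f : PowerSeries R) (N : ℕ) :
    (1 + f) * derivativeFun (logPS f N) =
      derivativeFun f + (-1 : PowerSeries R) ^ (N + 1) * f ^ N * derivativeFun f := by
  induction N with
  | zero =>
    have : logPS f 0 = 0 := by simp [logPS]
    rw [this]
    have h0 : derivativeFun (0 : PowerSeries R) = 0 := by
      ext n; simp [aux_coeff_derivativeFun]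
    rw [h0]
    ring
  | succ N ih =>
    have hstep : logPS f (N + 1) = logPS f N +
        PowerSeries.C (algebraMap ℚ R ((-1 : ℚ) ^ (N + 1 + 1) / ((N + 1 : ℕ) : ℚ))) *
          f ^ (N + 1) := by
      rw [logPS, logPS, ← Finset.sum_Icc_succ_top (by omega : 1 ≤ N + 1)]
    have hc : PowerSeries.C (algebraMap ℚ R ((-1 : ℚ) ^ (N + 1 + 1) / ((N + 1 : ℕ) : ℚ))) *
        (((N : PowerSeries R)) + 1) = (-1 : PowerSeries R) ^ (N + 1 + 1) := by
      have h1 : ((N : PowerSeries R) + 1) =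
          PowerSeries.C (algebraMap ℚ R ((N : ℚ) + 1)) := by
        push_cast
        simp
      rw [h1, ← map_mul, ← map_mul]
      have h2 : ((-1 : ℚ) ^ (N + 1 + 1) / ((N + 1 : ℕ) : ℚ)) * ((N : ℚ) + 1) =
          (-1 : ℚ) ^ (N + 1 + 1) := by
        push_cast
        field_simp
      rw [h2, map_pow, map_pow, map_neg, map_neg, map_one, map_one]
    rw [hstep, derivativeFun_add, aux_derivativeFun_mul', aux_derivativeFun_C, mul_zero, add_zero,
      aux_derivativeFun_pow, mul_add, ih]
    rw [show PowerSeries.C (algebraMap ℚ R ((-1 : ℚ) ^ (N + 1 + 1) / ((N + 1 : ℕ) : ℚ))) *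
        (((N : PowerSeries R) + 1) * f ^ N * derivativeFun f) =
        (PowerSeries.C (algebraMap ℚ R ((-1 : ℚ) ^ (N + 1 + 1) / ((N + 1 : ℕ) : ℚ))) *
          ((N : PowerSeries R) + 1)) * f ^ N * derivativeFun f by ring, hc]
    ring

lemma aux_log_deriv {f : PowerSeries R} (h0 : constantCoeff f = 0) :
    (1 + f) * derivativeFun (logOnePlus f) = derivativeFun f := by
  ext n
  rw [coeff_mul]
  have step : ∀ p ∈ Finset.HasAntidiagonal.antidiagonal n,
      coeff p.1 (1 + f) * coeff p.2 (derivativeFun (logOnePlus f)) =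
      coeff p.1 (1 + f) * coeff p.2 (derivativeFun (logPS f (n + 1))) := by
    intro p hp
    have hp2 : p.2 ≤ n := Finset.HasAntidiagonal.antidiagonal.snd_le hp
    rw [aux_coeff_derivativeFun, aux_coeff_derivativeFun,
      aux_coeff_log_eq h0 (by omega : p.2 + 1 ≤ n + 1)]
  rw [Finset.sum_congr rfl step, ← coeff_mul, aux_telescope, map_add]
  have hz : coeff n ((-1 : PowerSeries R) ^ (n + 1 + 1) * f ^ (n + 1) * derivativeFun f)
      = 0 := by
    have hdvd : (X : PowerSeries R) ^ (n + 1) ∣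
        (-1 : PowerSeries R) ^ (n + 1 + 1) * f ^ (n + 1) * derivativeFun f := by
      have : (X : PowerSeries R) ^ (n + 1) ∣ f ^ (n + 1) :=
        pow_dvd_pow_of_dvd (X_dvd_iff.mpr h0) _
      exact (this.mul_left _).mul_right _
    exact X_pow_dvd_iff.mp hdvd n (by omega)
  rw [hz, add_zero]

end Aux

/-- The refined Manin equation: a formal power series `χ(y,κ) ∈ y·ℚ[κ]⟦y⟧`
satisfying `∂χ/∂y = (1+χ)/(1+y−κχ)` also satisfies
`κ(1+χ)·log(1+χ) = (κ+1)χ − y`. Here `κ` is `Polynomial.X : ℚ[κ]`, and the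
inverse of `1+y−κχ` (a power series with constant term `1`) is taken via
`PowerSeries.invOfUnit` at the unit `1`. -/
theorem ode_implies_refined_manin_equation (χ : PowerSeries (Polynomial ℚ))
    (h0 : PowerSeries.coeff (R := Polynomial ℚ) 0 χ = 0)
    (hode : PowerSeries.derivativeFun χ =
      (1 + χ) * PowerSeries.invOfUnit
        (1 + PowerSeries.X - PowerSeries.C (R := Polynomial ℚ) Polynomial.X * χ) 1) :
    PowerSeries.C (R := Polynomial ℚ) Polynomial.X * ((1 + χ) * logOnePlus χ) =
      (PowerSeries.C (R := Polynomial ℚ) Polynomial.X + 1) * χ - PowerSeries.X := by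
  set K : PowerSeries (Polynomial ℚ) := PowerSeries.C (R := Polynomial ℚ) Polynomial.X with hK
  set D : PowerSeries (Polynomial ℚ) := 1 + PowerSeries.X - K * χ with hDdef
  have hχ0 : constantCoeff χ = 0 := by
    rw [← coeff_zero_eq_constantCoeff_apply]; exact h0
  have hD0 : constantCoeff D = 1 := by
    simp [hDdef, hK, hχ0]
  have hDinv : D * invOfUnit D 1 = 1 := mul_invOfUnit D 1 (by rw [hD0]; rfl)
  have hχ'D : derivativeFun χ * D = 1 + χ := by
    rw [hode]
    calc (1 + χ) * invOfUnit D 1 * D = (1 + χ) * (D * invOfUnit D 1) := by ring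
    _ = 1 + χ := by rw [hDinv]; ring
  have hL : (1 + χ) * derivativeFun (logOnePlus χ) = derivativeFun χ := aux_log_deriv hχ0
  set L : PowerSeries (Polynomial ℚ) := logOnePlus χ with hLdef
  set F : PowerSeries (Polynomial ℚ) := K * ((1 + χ) * L) - ((K + 1) * χ - PowerSeries.X) with hFdef
  have hF0 : coeff 0 F = 0 := by
    have hL0 : coeff 0 L = 0 := by
      rw [hLdef, logOnePlus, coeff_mk]
      simp
    have hL0' : constantCoeff L = 0 := by
      rw [← coeff_zero_eq_constantCoeff_apply]; exact hL0
    simp [hFdef, coeff_zero_eq_constantCoeff, map_sub, map_add, map_mul, hχ0, hL0', hK]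
  have hF' : derivativeFun F * D = F := by
    have hdF : derivativeFun F =
        K * (derivativeFun χ * L + (1 + χ) * derivativeFun L) -
          ((K + 1) * derivativeFun χ - 1) := by
      rw [hFdef, aux_derivativeFun_sub, aux_derivativeFun_sub, aux_derivativeFun_mul',
        aux_derivativeFun_mul', aux_derivativeFun_mul']
      have h1 : derivativeFun K = 0 := aux_derivativeFun_C _
      have h2 : derivativeFun (K + 1) = 0 := by
        rw [derivativeFun_add, h1, derivativeFun_one, add_zero]
      have h3 : derivativeFun (1 + χ) = derivativeFun χ := by
        rw [derivativeFun_add, derivativeFun_one, zero_add]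
      have h4 : derivativeFun (PowerSeries.X : PowerSeries (Polynomial ℚ)) = 1 := by
        ext n
        rw [aux_coeff_derivativeFun]
        simp [coeff_X, coeff_one]
        split_ifs with h
        · simp [h]
        · rcases n with _ | n
          · simp at h
          · simp
      rw [h1, h2, h3, h4]
      ring
    rw [hdF, hFdef]
    have hLD : (1 + χ) * derivativeFun L * D = 1 + χ := by
      rw [hL, hχ'D]
    calc (K * (derivativeFun χ * L + (1 + χ) * derivativeFun L) -
          ((K + 1) * derivativeFun χ - 1)) * D
        = K * L * (derivativeFun χ * D) + K * ((1 + χ) * derivativeFun L * D) -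
            (K + 1) * (derivativeFun χ * D) + D := by ring
      _ = K * L * (1 + χ) + K * (1 + χ) - (K + 1) * (1 + χ) + D := by
          rw [hχ'D, hLD]
      _ = K * ((1 + χ) * L) - ((K + 1) * χ - PowerSeries.X) := by
          rw [hDdef]; ring
  have hFzero : F = 0 := by
    have hcoeff : ∀ n, coeff n F = 0 := by
      intro n
      induction n using Nat.strong_induction_on with
      | _ n ih =>
        rcases n with _ | n
        · exact hF0
        · have key : coeff n F = 0 := by
            rcases Nat.lt_or_ge n (n + 1) with _ | h
            · exact ih n (by omega)
            · omega
          have hn : coeff n (derivativeFun F * D) = 0 := by rw [hF']; exact key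
          rw [coeff_mul] at hn
          have hsingle : ∑ p ∈ Finset.HasAntidiagonal.antidiagonal n,
              coeff p.1 (derivativeFun F) * coeff p.2 D =
              coeff n (derivativeFun F) * coeff 0 D := by
            apply Finset.sum_eq_single_of_mem (n, 0)
            · simp
            · intro p hp hne
              have hp1 : p.1 + p.2 = n := Finset.HasAntidiagonal.mem_antidiagonal.mp hp
              have hp1n : p.1 < n := by
                rcases Nat.lt_or_ge p.1 n with h | h
                · exact h
                · exfalso; apply hne
                  have : p.1 = n := le_antisymm (by omega) h
                  have : p.2 = 0 := by omega
                  exact Prod.ext (by omega) this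
              rw [aux_coeff_derivativeFun, ih (p.1 + 1) (by omega), zero_mul, zero_mul]
          rw [hsingle, aux_coeff_derivativeFun, coeff_zero_eq_constantCoeff, hD0, mul_one] at hn
          have hne : ((n : (Polynomial ℚ)) + 1) ≠ 0 := by
            exact_mod_cast Nat.cast_add_one_ne_zero (R := Polynomial ℚ) n
          exact (mul_eq_zero.mp hn).resolve_right (by exact_mod_cast hne)
    exact PowerSeries.ext fun n => by rw [map_zero]; exact hcoeff n
  rw [← sub_eq_zero, ← hFdef]
  exact hFzero
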